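/- Let V = span{v}, W = span{w} be orthogonal one-dimensional subspaces of ℂ^n. Then (V,W) is a support if and only if |v_i|/‖v‖ = |w_i|/‖w‖ for all i = 1,...,n. -/

import Mathlib

open scoped InnerProductSpace

/-- `(V, W)` is a support, i.e. there exist nonzero vectors of `V` and `W`
with equal Hadamard sums. -/
def IsSupport (n : ℕ) (V W : Submodule ℂ (EuclideanSpace ℂ (Fin n))) : Prop :=
  ∃ (p q : ℕ), 0 < p ∧ 0 < q ∧
    ∃ (v : Fin p → EuclideanSpace ℂ (Fin n)) (w : Fin q → EuclideanSpace ℂ (Fin n)),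
      (∀ i, v i ∈ V) ∧ (∀ i, v i ≠ 0) ∧ (∀ j, w j ∈ W) ∧ (∀ j, w j ≠ 0) ∧
      ∀ k : Fin n, ∑ i, v i k * star (v i k) = ∑ j, w j k * star (w j k)

lemma norm_sq_eq_sum_normSq (n : ℕ) (v : EuclideanSpace ℂ (Fin n)) :
    ‖v‖ ^ 2 = ∑ k, Complex.normSq (v k) := by
  rw [EuclideanSpace.norm_eq, Real.sq_sqrt (by positivity)]
  simp [Complex.sq_norm]

/-- For one-dimensional orthogonal subspaces `span{v}`, `span{w}`, being a
support is equivalent to `|v_i|/‖v‖ = |w_i|/‖w‖` for all `i`. -/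
theorem one_dim_support_iff (n : ℕ) (v w : EuclideanSpace ℂ (Fin n))
    (hv : v ≠ 0) (hw : w ≠ 0) (hvw : ⟪v, w⟫_ℂ = 0) :
    IsSupport n (Submodule.span ℂ {v}) (Submodule.span ℂ {w}) ↔
      ∀ i : Fin n, ‖v i‖ / ‖v‖ = ‖w i‖ / ‖w‖ := by
  have hvn : (0:ℝ) < ‖v‖ := norm_pos_iff.mpr hv
  have hwn : (0:ℝ) < ‖w‖ := norm_pos_iff.mpr hw
  constructor
  · rintro ⟨p, q, hp, hq, vv, ww, hvV, hvne, hwW, hwne, hsum⟩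
    choose c hc using fun i => Submodule.mem_span_singleton.mp (hvV i)
    choose d hd using fun j => Submodule.mem_span_singleton.mp (hwW j)
    set a : ℝ := ∑ i, Complex.normSq (c i) with ha
    set b : ℝ := ∑ j, Complex.normSq (d j) with hb
    have key1 : ∀ k, a * Complex.normSq (v k) = b * Complex.normSq (w k) := by
      intro k
      have := hsum k
      have hl : ∀ i, vv i k = c i * v k := by
        intro i; rw [← hc i]; rfl
      have hr : ∀ j, ww j k = d j * w k := by
        intro j; rw [← hd j]; rfl
      simp only [hl, hr] at this
      have hA : ∀ (m : ℕ) (e : Fin m → ℂ) (z : ℂ),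
          ∑ i, (e i * z) * star (e i * z)
            = ((∑ i, Complex.normSq (e i) : ℝ) : ℂ) * ((Complex.normSq z : ℝ) : ℂ) := by
        intro m e z
        push_cast
        rw [Finset.sum_mul]
        refine Finset.sum_congr rfl fun i _ => ?_
        rw [Complex.star_def, map_mul, ← Complex.mul_conj, ← Complex.mul_conj]
        ring
      rw [hA, hA] at this
      have : (↑(a * Complex.normSq (v k)) : ℂ) = ↑(b * Complex.normSq (w k)) := by
        push_cast [ha, hb]
        exact_mod_cast this
      exact_mod_cast this
    have hcne : ∀ i, c i ≠ 0 := by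
      intro i h
      apply hvne i
      rw [← hc i, h, zero_smul]
    have hdne : ∀ j, d j ≠ 0 := by
      intro j h
      apply hwne j
      rw [← hd j, h, zero_smul]
    have hapos : 0 < a := by
      have : Nonempty (Fin p) := ⟨⟨0, hp⟩⟩
      apply Finset.sum_pos
      · intro i _; exact Complex.normSq_pos.mpr (hcne i)
      · exact Finset.univ_nonempty
    have hbpos : 0 < b := by
      have : Nonempty (Fin q) := ⟨⟨0, hq⟩⟩
      apply Finset.sum_pos
      · intro j _; exact Complex.normSq_pos.mpr (hdne j)
      · exact Finset.univ_nonempty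
    have key2 : a * ‖v‖ ^ 2 = b * ‖w‖ ^ 2 := by
      rw [norm_sq_eq_sum_normSq, norm_sq_eq_sum_normSq, Finset.mul_sum, Finset.mul_sum]
      exact Finset.sum_congr rfl fun k _ => key1 k
    intro i
    rw [div_eq_div_iff hvn.ne' hwn.ne']
    have hsq : (‖v i‖ * ‖w‖) ^ 2 = (‖w i‖ * ‖v‖) ^ 2 := by
      have h1 := key1 i
      rw [← Complex.sq_norm, ← Complex.sq_norm] at h1
      nlinarith [hapos, hbpos]
    have h0 : (0:ℝ) ≤ ‖v i‖ * ‖w‖ := by positivity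
    have h0' : (0:ℝ) ≤ ‖w i‖ * ‖v‖ := by positivity
    nlinarith [hsq, h0, h0']
  · intro h
    refine ⟨1, 1, one_pos, one_pos, fun _ => ((‖v‖:ℂ)⁻¹) • v, fun _ => ((‖w‖:ℂ)⁻¹) • w,
      fun _ => Submodule.smul_mem _ _ (Submodule.mem_span_singleton_self v),
      fun _ => smul_ne_zero (by exact_mod_cast inv_ne_zero (by exact_mod_cast hvn.ne')) hv,
      fun _ => Submodule.smul_mem _ _ (Submodule.mem_span_singleton_self w),
      fun _ => smul_ne_zero (by exact_mod_cast inv_ne_zero (by exact_mod_cast hwn.ne')) hw,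
      ?_⟩
    intro k
    have hk := h k
    rw [div_eq_div_iff hvn.ne' hwn.ne'] at hk
    have hl : (((‖v‖:ℂ)⁻¹) • v) k = (‖v‖:ℂ)⁻¹ * v k := rfl
    have hr : (((‖w‖:ℂ)⁻¹) • w) k = (‖w‖:ℂ)⁻¹ * w k := rfl
    simp only [Fin.sum_univ_one, hl, hr]
    have e1 : ((‖v‖:ℂ))⁻¹ * v k * star (((‖v‖:ℂ))⁻¹ * v k)
        = ((Complex.normSq (v k) / ‖v‖ ^ 2 : ℝ) : ℂ) := by
      rw [Complex.star_def, map_mul, map_inv₀, Complex.conj_ofReal]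
      push_cast
      rw [← Complex.mul_conj]
      ring
    have e2 : ((‖w‖:ℂ))⁻¹ * w k * star (((‖w‖:ℂ))⁻¹ * w k)
        = ((Complex.normSq (w k) / ‖w‖ ^ 2 : ℝ) : ℂ) := by
      rw [Complex.star_def, map_mul, map_inv₀, Complex.conj_ofReal]
      push_cast
      rw [← Complex.mul_conj]
      ring
    rw [e1, e2]
    have hre : Complex.normSq (v k) / ‖v‖ ^ 2 = Complex.normSq (w k) / ‖w‖ ^ 2 := by
      rw [div_eq_div_iff (by positivity) (by positivity), ← Complex.sq_norm, ← Complex.sq_norm]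
      have := congrArg (fun x : ℝ => x ^ 2) hk
      simpa [mul_pow] using this
    exact_mod_cast congrArg (fun x : ℝ => (x : ℂ)) hre
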